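/- arXiv:1805.11316 — 2 statements merged into one kernel-verified Lean document; each statement's English description precedes it below -/
import Mathlib

section
/- For given seed functions f, f' ∈ L^p(I) (1 ≤ p ≤ ∞) and every base function b ∈ L^p(I), it holds that ‖(f *_T b) − (f' *_T b)‖_p ≤ (1/(1−Λ)) ‖f − f'‖_p. -/
open MeasureTheory ENNReal

noncomputable section

/-- The inverse of the increasing affine map `L n` sending `[x 0, x N]` onto
`[x n, x (n+1)]` (so `L n (x 0) = x n.castSucc` and `L n (x N) = x n.succ`). -/
def Linv {N : ℕ} (x : Fin (N + 1) → ℝ) (n : Fin N) (y : ℝ) : ℝ :=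
  x 0 + (y - x n.castSucc) * (x (Fin.last N) - x 0) / (x n.succ - x n.castSucc)

/-- The subinterval `I n` of the partition: `[x 0, x 1]` for `n = 0` and
`(x n, x (n+1)]` otherwise. -/
def subInt {N : ℕ} (x : Fin (N + 1) → ℝ) (n : Fin N) : Set ℝ :=
  if n.val = 0 then Set.Icc (x n.castSucc) (x n.succ)
  else Set.Ioc (x n.castSucc) (x n.succ)

/-- `h` is the image of `g` under the Read–Bajraktarević operator `T_{f,b}` with
scale functions `α`, almost everywhere: on each `I n`,
`h = f + (α n ∘ Lₙ⁻¹) · ((g - b) ∘ Lₙ⁻¹)`. -/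
def RBEq {N : ℕ} (μ : Measure ℝ) (x : Fin (N + 1) → ℝ) (α : Fin N → ℝ → ℝ)
    (f b g h : ℝ → ℝ) : Prop :=
  ∀ n : Fin N, ∀ᵐ t ∂μ, t ∈ subInt x n →
    h t = f t + α n (Linv x n t) * (g (Linv x n t) - b (Linv x n t))

/-- `h` satisfies the self-referential equation of `T_{f,b}`, i.e. `h` is a fixed
point of `T_{f,b}`; `h` is then the fractal convolution `f *_T b`. -/
def SelfRef {N : ℕ} (μ : Measure ℝ) (x : Fin (N + 1) → ℝ) (α : Fin N → ℝ → ℝ)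
    (f b h : ℝ → ℝ) : Prop :=
  RBEq μ x α f b h h

section Helpers

variable {N : ℕ} {x : Fin (N + 1) → ℝ}

lemma measurable_Linv (n : Fin N) : Measurable (Linv x n) := by
  unfold Linv; fun_prop

lemma measurableSet_subInt (n : Fin N) : MeasurableSet (subInt x n) := by
  unfold subInt; split <;> [exact measurableSet_Icc; exact measurableSet_Ioc]

lemma cs_lt_succ (hx : StrictMono x) (n : Fin N) : x n.castSucc < x n.succ :=
  @hx n.castSucc n.succ Fin.castSucc_lt_succ

lemma x0_lt_last (hx : StrictMono x) (hN : 0 < N) : x 0 < x (Fin.last N) :=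
  hx (by rw [Fin.lt_def]; simpa using hN)

lemma subInt_subset (hx : StrictMono x) (n : Fin N) :
    subInt x n ⊆ Set.Icc (x 0) (x (Fin.last N)) := by
  unfold subInt
  split
  · exact Set.Icc_subset_Icc (hx.monotone (Fin.zero_le _)) (hx.monotone (Fin.le_last _))
  · exact Set.Ioc_subset_Icc_self.trans
      (Set.Icc_subset_Icc (hx.monotone (Fin.zero_le _)) (hx.monotone (Fin.le_last _)))

lemma preimage_Linv_Ioc (hx : StrictMono x) (hN : 0 < N) (n : Fin N) :
    Linv x n ⁻¹' Set.Ioc (x 0) (x (Fin.last N)) = Set.Ioc (x n.castSucc) (x n.succ) := by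
  have hd : (0:ℝ) < x n.succ - x n.castSucc := sub_pos.2 (cs_lt_succ hx n)
  have hD : (0:ℝ) < x (Fin.last N) - x 0 := sub_pos.2 (x0_lt_last hx hN)
  have hq : (0:ℝ) < (x (Fin.last N) - x 0) / (x n.succ - x n.castSucc) := div_pos hD hd
  have hqd : (x (Fin.last N) - x 0) / (x n.succ - x n.castSucc) * (x n.succ - x n.castSucc)
      = x (Fin.last N) - x 0 := div_mul_cancel₀ _ hd.ne'
  ext y
  have hLy : Linv x n y = x 0 + (y - x n.castSucc) *
      ((x (Fin.last N) - x 0) / (x n.succ - x n.castSucc)) := by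
    unfold Linv; ring
  simp only [Set.mem_preimage, Set.mem_Ioc, hLy]
  constructor
  · rintro ⟨h1, h2⟩
    exact ⟨by nlinarith, by nlinarith⟩
  · rintro ⟨h1, h2⟩
    exact ⟨by nlinarith, by nlinarith⟩

lemma preimage_Linv_Icc (hx : StrictMono x) (hN : 0 < N) (n : Fin N) :
    Linv x n ⁻¹' Set.Icc (x 0) (x (Fin.last N)) = Set.Icc (x n.castSucc) (x n.succ) := by
  have hd : (0:ℝ) < x n.succ - x n.castSucc := sub_pos.2 (cs_lt_succ hx n)
  have hD : (0:ℝ) < x (Fin.last N) - x 0 := sub_pos.2 (x0_lt_last hx hN)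
  have hq : (0:ℝ) < (x (Fin.last N) - x 0) / (x n.succ - x n.castSucc) := div_pos hD hd
  have hqd : (x (Fin.last N) - x 0) / (x n.succ - x n.castSucc) * (x n.succ - x n.castSucc)
      = x (Fin.last N) - x 0 := div_mul_cancel₀ _ hd.ne'
  ext y
  have hLy : Linv x n y = x 0 + (y - x n.castSucc) *
      ((x (Fin.last N) - x 0) / (x n.succ - x n.castSucc)) := by
    unfold Linv; ring
  simp only [Set.mem_preimage, Set.mem_Icc, hLy]
  constructor
  · rintro ⟨h1, h2⟩
    exact ⟨by nlinarith, by nlinarith⟩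
  · rintro ⟨h1, h2⟩
    exact ⟨by nlinarith, by nlinarith⟩

lemma Linv_affine (n : Fin N) : Linv x n = fun y =>
    (x (Fin.last N) - x 0) / (x n.succ - x n.castSucc) * y +
      (x 0 - x n.castSucc * ((x (Fin.last N) - x 0) / (x n.succ - x n.castSucc))) := by
  funext y; unfold Linv; ring

lemma map_volume_Linv (hx : StrictMono x) (hN : 0 < N) (n : Fin N) :
    Measure.map (Linv x n) volume
      = ENNReal.ofReal ((x n.succ - x n.castSucc) / (x (Fin.last N) - x 0)) • volume := by
  have hd : (0:ℝ) < x n.succ - x n.castSucc := sub_pos.2 (cs_lt_succ hx n)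
  have hD : (0:ℝ) < x (Fin.last N) - x 0 := sub_pos.2 (x0_lt_last hx hN)
  set s : ℝ := (x (Fin.last N) - x 0) / (x n.succ - x n.castSucc) with hs
  have hspos : 0 < s := div_pos hD hd
  set c : ℝ := x 0 - x n.castSucc * s with hc
  have heq : Linv x n = (fun y => y + c) ∘ (fun y => s * y) := by
    rw [Linv_affine]; rfl
  rw [heq, ← Measure.map_map (measurable_add_const c) (measurable_const_mul s),
    Real.map_volume_mul_left hspos.ne', Measure.map_smul, map_add_right_eq_self]
  congr 1
  rw [abs_of_pos (inv_pos.2 hspos), hs, inv_div]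

lemma map_restrict_Linv (hx : StrictMono x) (hN : 0 < N) (n : Fin N) :
    Measure.map (Linv x n) (volume.restrict (subInt x n))
      = ENNReal.ofReal ((x n.succ - x n.castSucc) / (x (Fin.last N) - x 0)) •
        volume.restrict (Set.Icc (x 0) (x (Fin.last N))) := by
  by_cases hn : n.val = 0
  · have h : subInt x n = Linv x n ⁻¹' Set.Icc (x 0) (x (Fin.last N)) := by
      rw [preimage_Linv_Icc hx hN n, subInt, if_pos hn]
    rw [h, ← Measure.restrict_map (measurable_Linv n) measurableSet_Icc,
      map_volume_Linv hx hN n, Measure.restrict_smul]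
  · have h : subInt x n = Linv x n ⁻¹' Set.Ioc (x 0) (x (Fin.last N)) := by
      rw [preimage_Linv_Ioc hx hN n, subInt, if_neg hn]
    rw [h, ← Measure.restrict_map (measurable_Linv n) measurableSet_Ioc,
      map_volume_Linv hx hN n, Measure.restrict_smul,
      Measure.restrict_congr_set Ioc_ae_eq_Icc]

lemma pairwise_disjoint_subInt (hx : StrictMono x) :
    Pairwise (Function.onFun Disjoint (subInt x)) := by
  have key : ∀ n m : Fin N, n < m → Disjoint (subInt x n) (subInt x m) := by
    intro n m hnm
    rw [Set.disjoint_left]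
    intro t htn htm
    have h1 : t ≤ x n.succ := by
      unfold subInt at htn; split at htn <;> exact htn.2
    have hm0 : ¬ m.val = 0 := by
      have h := Fin.lt_def.1 hnm; omega
    have h2 : x m.castSucc < t := by
      unfold subInt at htm; rw [if_neg hm0] at htm; exact htm.1
    have h3 : x n.succ ≤ x m.castSucc := by
      apply hx.monotone
      rw [Fin.le_def]
      simp only [Fin.val_succ, Fin.coe_castSucc]
      exact Fin.lt_def.1 hnm
    linarith
  intro n m hnm
  rcases lt_or_gt_of_ne hnm with h | h
  · exact key n m h
  · exact (key m n h).symm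

lemma iUnion_subInt (hx : StrictMono x) (hN : 0 < N) :
    (⋃ n, subInt x n) = Set.Icc (x 0) (x (Fin.last N)) := by
  apply Set.Subset.antisymm
  · exact Set.iUnion_subset fun n => subInt_subset hx n
  · intro t ht
    obtain ⟨ht0, htN⟩ := ht
    classical
    have hex : ∃ m : ℕ, t ≤ x ⟨min m N, by omega⟩ := ⟨N, htN.trans (le_of_eq (congrArg x (Fin.ext (by simp))))⟩
    obtain ⟨k, hkN, hkle, hmin⟩ :
        ∃ k : ℕ, k ≤ N ∧ t ≤ x ⟨min k N, by omega⟩ ∧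
          ∀ j : ℕ, j < k → ¬ t ≤ x ⟨min j N, by omega⟩ :=
      ⟨Nat.find hex, Nat.find_min' hex (htN.trans (le_of_eq (congrArg x (Fin.ext (by simp))))), Nat.find_spec hex,
        fun j hj => Nat.find_min hex hj⟩
    have hfin : (⟨min k N, by omega⟩ : Fin (N+1)) = ⟨k, by omega⟩ :=
      Fin.ext (by simp [min_eq_left hkN])
    rw [hfin] at hkle
    rcases Nat.eq_zero_or_pos k with h0 | hpos
    · subst h0
      have ht' : t ≤ x 0 := by
        have h00 : (⟨0, by omega⟩ : Fin (N+1)) = 0 := Fin.ext (by simp)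
        rwa [h00] at hkle
      refine Set.mem_iUnion.2 ⟨⟨0, hN⟩, ?_⟩
      unfold subInt
      rw [if_pos rfl]
      constructor
      · simpa [Fin.castSucc_mk] using ht0
      · have h1 : x 0 ≤ x (⟨0, hN⟩ : Fin N).succ := hx.monotone (Fin.zero_le _)
        have h2 : x (⟨0, hN⟩ : Fin N).castSucc = x 0 := by congr 1
        linarith [le_antisymm ht' ht0, h2.le]
    · obtain ⟨j, rfl⟩ : ∃ j, k = j + 1 := ⟨k - 1, by omega⟩
      have hjN : j < N := by omega
      have hnot := hmin j (by omega)
      have hfin2 : (⟨min j N, by omega⟩ : Fin (N+1)) = ⟨j, by omega⟩ :=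
        Fin.ext (by simp [min_eq_left (by omega : j ≤ N)])
      rw [hfin2] at hnot
      push_neg at hnot
      refine Set.mem_iUnion.2 ⟨⟨j, hjN⟩, ?_⟩
      unfold subInt
      by_cases hj0 : j = 0
      · subst hj0
        rw [if_pos rfl]
        constructor
        · convert ht0 using 2; exact Fin.ext rfl
        · exact le_of_le_of_eq hkle (congrArg x (Fin.ext rfl))
      · rw [if_neg hj0]
        constructor
        · convert hnot using 2; exact Fin.ext rfl
        · exact le_of_le_of_eq hkle (congrArg x (Fin.ext rfl))

lemma sum_sub_eq (hx : StrictMono x) :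
    ∑ n : Fin N, (x n.succ - x n.castSucc) = x (Fin.last N) - x 0 := by
  have hg : ∀ n : Fin N,
      x n.succ - x n.castSucc
        = (fun i : ℕ => x ⟨min i N, by omega⟩) (n.val + 1)
          - (fun i : ℕ => x ⟨min i N, by omega⟩) n.val := by
    intro n
    have h1 : min (n.val + 1) N = n.val + 1 := min_eq_left n.is_lt
    have h2 : min n.val N = n.val := min_eq_left n.is_lt.le
    simp only []
    congr 1
    · congr 1; exact (Fin.ext (by simp [Fin.val_succ, h1])).symm
    · congr 1; exact (Fin.ext (by simp [h2])).symm
  calc ∑ n : Fin N, (x n.succ - x n.castSucc)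
      = ∑ i ∈ Finset.range N, ((fun i : ℕ => x ⟨min i N, by omega⟩) (i + 1)
          - (fun i : ℕ => x ⟨min i N, by omega⟩) i) := by
        rw [← Fin.sum_univ_eq_sum_range]
        exact Finset.sum_congr rfl fun n _ => hg n
    _ = x (Fin.last N) - x 0 := by
        rw [Finset.sum_range_sub (fun i : ℕ => x ⟨min i N, by omega⟩)]
        congr 1 <;> congr 1 <;> exact Fin.ext (by simp [Fin.last])

end Helpers

/-- For seed functions `f, f'` and any base function `b`,
`‖(f *_T b) − (f' *_T b)‖_p ≤ (1/(1−Λ)) ‖f − f'‖_p`. -/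
theorem fractal_convolution_seed_stability
    (N : ℕ) (hN : 2 ≤ N) (x : Fin (N + 1) → ℝ) (hx : StrictMono x)
    (μ : Measure ℝ) (hμ : μ = volume.restrict (Set.Icc (x 0) (x (Fin.last N))))
    (p : ℝ≥0∞) [Fact (1 ≤ p)]
    (α : Fin N → Lp ℝ ∞ μ)
    (Λ : ℝ) (hΛdef : Λ = ⨆ n : Fin N, ‖α n‖) (hΛ : Λ < 1)
    (f f' b : Lp ℝ p μ) (fb f'b : Lp ℝ p μ)
    (hfb : SelfRef μ x (fun n => ⇑(α n)) ⇑f ⇑b ⇑fb)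
    (hf'b : SelfRef μ x (fun n => ⇑(α n)) ⇑f' ⇑b ⇑f'b) :
    ‖fb - f'b‖ ≤ 1 / (1 - Λ) * ‖f - f'‖ := by
  have hN0 : 0 < N := by omega
  have hp1 : (1:ℝ≥0∞) ≤ p := Fact.out
  have hp0 : p ≠ 0 := (zero_lt_one.trans_le hp1).ne'
  haveI : Nonempty (Fin N) := ⟨⟨0, hN0⟩⟩
  have hbdd : BddAbove (Set.range fun n : Fin N => ‖α n‖) :=
    (Set.finite_range _).bddAbove
  have hαΛ : ∀ n : Fin N, ‖α n‖ ≤ Λ := fun n => hΛdef ▸ le_ciSup hbdd n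
  have hΛ0 : 0 ≤ Λ := le_trans (norm_nonneg (α ⟨0, hN0⟩)) (hαΛ _)
  set c : ℝ≥0∞ := ENNReal.ofReal Λ with hcdef
  have hc1 : c < 1 := by rw [hcdef]; exact ENNReal.ofReal_lt_one.2 hΛ
  have hctop : c ≠ ∞ := ENNReal.ofReal_ne_top
  -- functions
  set e : ℝ → ℝ := (⇑fb) - (⇑f'b) with he
  set F : ℝ → ℝ := (⇑f) - (⇑f') with hF
  set g : Fin N → ℝ → ℝ := fun n => (fun y => (α n) y * e y) ∘ (Linv x n) with hg
  set G : ℝ → ℝ := fun t => ∑ n : Fin N, (subInt x n).indicator (g n) t with hGdef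
  -- measures
  have hres : ∀ n : Fin N, μ.restrict (subInt x n) = volume.restrict (subInt x n) := by
    intro n
    rw [hμ, Measure.restrict_restrict (measurableSet_subInt n),
      Set.inter_eq_self_of_subset_left (subInt_subset hx n)]
  have hmap : ∀ n : Fin N, Measure.map (Linv x n) (μ.restrict (subInt x n))
      = ENNReal.ofReal ((x n.succ - x n.castSucc) / (x (Fin.last N) - x 0)) • μ := by
    intro n; rw [hres n, map_restrict_Linv hx hN0 n, ← hμ]
  have hqmp : ∀ n : Fin N,
      Measure.QuasiMeasurePreserving (Linv x n) (μ.restrict (subInt x n)) μ := by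
    intro n
    exact ⟨measurable_Linv n, by
      rw [hmap n]; exact Measure.AbsolutelyContinuous.rfl.smul_left _⟩
  have hμU : μ.restrict (⋃ n, subInt x n) = μ := by
    rw [iUnion_subInt hx hN0, hμ, Measure.restrict_restrict measurableSet_Icc,
      Set.inter_self]
  have hμsum : μ = Measure.sum (fun n => μ.restrict (subInt x n)) := by
    conv_lhs => rw [← hμU]
    exact Measure.restrict_iUnion (pairwise_disjoint_subInt hx)
      (fun n => measurableSet_subInt n)
  -- a.e. bound on the scale functions
  have hαbd : ∀ n : Fin N, ∀ᵐ y ∂μ, ‖(α n) y‖ ≤ Λ := by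
    intro n
    have h1 : ∀ᵐ y ∂μ, (‖(α n) y‖₊ : ℝ≥0∞) ≤ eLpNormEssSup (⇑(α n)) μ :=
      ae_le_eLpNormEssSup
    have hne : eLpNormEssSup (⇑(α n)) μ ≠ ∞ := by
      have h := Lp.eLpNorm_ne_top (α n); rwa [eLpNorm_exponent_top] at h
    filter_upwards [h1] with y hy
    calc ‖(α n) y‖ = ((‖(α n) y‖₊ : ℝ≥0∞)).toReal := by simp
      _ ≤ (eLpNormEssSup (⇑(α n)) μ).toReal := ENNReal.toReal_mono hne hy
      _ = ‖α n‖ := by rw [Lp.norm_def, eLpNorm_exponent_top]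
      _ ≤ Λ := hαΛ n
  -- measurability
  have heM : AEStronglyMeasurable e μ :=
    (Lp.aestronglyMeasurable fb).sub (Lp.aestronglyMeasurable f'b)
  have hFM : AEStronglyMeasurable F μ :=
    (Lp.aestronglyMeasurable f).sub (Lp.aestronglyMeasurable f')
  have hgM : ∀ n : Fin N, AEStronglyMeasurable (g n) (μ.restrict (subInt x n)) := fun n =>
    ((Lp.aestronglyMeasurable (α n)).mul heM).comp_quasiMeasurePreserving (hqmp n)
  have hGM : AEStronglyMeasurable G μ := by
    apply Finset.aestronglyMeasurable_fun_sum
    intro n _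
    exact (aestronglyMeasurable_indicator_iff (measurableSet_subInt n)).2 (hgM n)
  -- G equals g n on subInt n
  have hGg : ∀ n : Fin N, ∀ t ∈ subInt x n, G t = g n t := by
    intro n t ht
    rw [hGdef]
    simp only []
    rw [Finset.sum_eq_single_of_mem n (Finset.mem_univ n)]
    · exact Set.indicator_of_mem ht _
    · intro m _ hmn
      exact Set.indicator_of_notMem
        (fun htm => Set.disjoint_left.1 (pairwise_disjoint_subInt hx hmn) htm ht) _
  -- the a.e. identity e = F + G
  have hae : ∀ᵐ t ∂μ, e t = F t + G t := by
    have hn : ∀ n : Fin N, ∀ᵐ t ∂μ.restrict (subInt x n), e t = F t + G t := by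
      intro n
      filter_upwards [ae_restrict_mem (measurableSet_subInt n),
        ae_restrict_of_ae (hfb n), ae_restrict_of_ae (hf'b n)] with t ht h1 h2
      have e1 := h1 ht
      have e2 := h2 ht
      rw [hGg n t ht]
      show fb t - f'b t = (f t - f' t) + ((α n) (Linv x n t) * (fb (Linv x n t) - f'b (Linv x n t)))
      rw [e1, e2]; ring
    have hsum : ∀ᵐ t ∂(Measure.sum fun n : Fin N => μ.restrict (subInt x n)),
        e t = F t + G t := by
      rw [Measure.ae_sum_eq]
      exact Filter.eventually_iSup.2 hn
    rwa [← hμsum] at hsum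
  -- norms
  set A := eLpNorm e p μ with hA
  have hAe : eLpNorm (⇑(fb - f'b)) p μ = A := eLpNorm_congr_ae (Lp.coeFn_sub fb f'b)
  have hAtop : A ≠ ∞ := by rw [← hAe]; exact Lp.eLpNorm_ne_top _
  set B := eLpNorm F p μ with hB
  have hBe : eLpNorm (⇑(f - f')) p μ = B := eLpNorm_congr_ae (Lp.coeFn_sub f f')
  have hBtop : B ≠ ∞ := by rw [← hBe]; exact Lp.eLpNorm_ne_top _
  -- key contraction estimate
  have hkey : eLpNorm G p μ ≤ c * A := by
    by_cases hpt : p = ∞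
    · subst hpt
      rw [hA, eLpNorm_exponent_top, eLpNorm_exponent_top]
      have hper : ∀ n : Fin N, ∀ᵐ t ∂μ.restrict (subInt x n),
          (‖G t‖₊ : ℝ≥0∞) ≤ c * eLpNormEssSup e μ := by
        intro n
        filter_upwards [ae_restrict_mem (measurableSet_subInt n),
          (hqmp n).ae (hαbd n),
          (hqmp n).ae (ae_le_eLpNormEssSup (f := e) (μ := μ))] with t ht hα' he'
        rw [hGg n t ht]
        have hsplit : (‖g n t‖₊ : ℝ≥0∞)
            = (‖(α n) (Linv x n t)‖₊ : ℝ≥0∞) * (‖e (Linv x n t)‖₊ : ℝ≥0∞) := by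
          rw [hg]
          simp [Function.comp, nnnorm_mul, ENNReal.coe_mul]
        rw [hsplit]
        refine mul_le_mul' ?_ he'
        rw [← enorm_eq_nnnorm, ← ofReal_norm]
        exact ENNReal.ofReal_le_ofReal hα'
      have hall : ∀ᵐ t ∂μ, (‖G t‖₊ : ℝ≥0∞) ≤ c * eLpNormEssSup e μ := by
        have hsum : ∀ᵐ t ∂(Measure.sum fun n : Fin N => μ.restrict (subInt x n)),
            (‖G t‖₊ : ℝ≥0∞) ≤ c * eLpNormEssSup e μ := by
          rw [Measure.ae_sum_eq]
          exact Filter.eventually_iSup.2 hper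
        rwa [← hμsum] at hsum
      exact essSup_le_of_ae_le _ hall
    · have hpt0 : 0 < p.toReal := ENNReal.toReal_pos hp0 hpt
      set pt := p.toReal with hptdef
      have hcpt : c ^ pt ≠ ∞ := ENNReal.rpow_ne_top_of_nonneg hpt0.le hctop
      have hIe : ∀ n : Fin N,
          ∫⁻ t, (‖G t‖₊ : ℝ≥0∞) ^ pt ∂(μ.restrict (subInt x n))
            ≤ ENNReal.ofReal ((x n.succ - x n.castSucc) / (x (Fin.last N) - x 0)) *
              (c ^ pt * ∫⁻ y, (‖e y‖₊ : ℝ≥0∞) ^ pt ∂μ) := by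
        intro n
        have e1 : ∫⁻ t, (‖G t‖₊ : ℝ≥0∞) ^ pt ∂(μ.restrict (subInt x n))
            = ∫⁻ t, (‖g n t‖₊ : ℝ≥0∞) ^ pt ∂(μ.restrict (subInt x n)) := by
          apply lintegral_congr_ae
          filter_upwards [ae_restrict_mem (measurableSet_subInt n)] with t ht
          rw [hGg n t ht]
        have hαeM : AEMeasurable (fun y => (‖(α n) y * e y‖₊ : ℝ≥0∞) ^ pt)
            (Measure.map (Linv x n) (μ.restrict (subInt x n))) := by
          rw [hmap n]
          exact (((Lp.aestronglyMeasurable (α n)).mul heM).enorm.pow_const pt).smul_measure _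
        have e2 : ∫⁻ t, (‖g n t‖₊ : ℝ≥0∞) ^ pt ∂(μ.restrict (subInt x n))
            = ∫⁻ y, (‖(α n) y * e y‖₊ : ℝ≥0∞) ^ pt
                ∂(Measure.map (Linv x n) (μ.restrict (subInt x n))) :=
          (lintegral_map' hαeM (measurable_Linv n).aemeasurable).symm
        have e3 : ∫⁻ y, (‖(α n) y * e y‖₊ : ℝ≥0∞) ^ pt ∂μ
            ≤ c ^ pt * ∫⁻ y, (‖e y‖₊ : ℝ≥0∞) ^ pt ∂μ := by
          rw [← lintegral_const_mul' _ _ hcpt]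
          apply lintegral_mono_ae
          filter_upwards [hαbd n] with y hy
          have hbound : (‖(α n) y‖₊ : ℝ≥0∞) ≤ c := by
            rw [← enorm_eq_nnnorm, ← ofReal_norm]
            exact ENNReal.ofReal_le_ofReal hy
          calc (‖(α n) y * e y‖₊ : ℝ≥0∞) ^ pt
              = ((‖(α n) y‖₊ : ℝ≥0∞) * (‖e y‖₊ : ℝ≥0∞)) ^ pt := by
                rw [nnnorm_mul, ENNReal.coe_mul]
            _ ≤ (c * (‖e y‖₊ : ℝ≥0∞)) ^ pt :=
                ENNReal.rpow_le_rpow (mul_le_mul' hbound le_rfl) hpt0.le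
            _ = c ^ pt * (‖e y‖₊ : ℝ≥0∞) ^ pt :=
                ENNReal.mul_rpow_of_nonneg _ _ hpt0.le
        rw [e1, e2, hmap n, lintegral_smul_measure]
        exact mul_le_mul' le_rfl e3
      have hones : (∑ n : Fin N,
          ENNReal.ofReal ((x n.succ - x n.castSucc) / (x (Fin.last N) - x 0))) = 1 := by
        have hD : (0:ℝ) < x (Fin.last N) - x 0 := sub_pos.2 (x0_lt_last hx hN0)
        rw [← ENNReal.ofReal_sum_of_nonneg
          (fun n _ => div_nonneg (sub_nonneg.2 (cs_lt_succ hx n).le) hD.le)]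
        rw [← Finset.sum_div, sum_sub_eq hx, div_self hD.ne', ENNReal.ofReal_one]
      have hInt : ∫⁻ t, (‖G t‖₊ : ℝ≥0∞) ^ pt ∂μ
          ≤ c ^ pt * ∫⁻ y, (‖e y‖₊ : ℝ≥0∞) ^ pt ∂μ := by
        calc ∫⁻ t, (‖G t‖₊ : ℝ≥0∞) ^ pt ∂μ
            = ∑ n : Fin N, ∫⁻ t, (‖G t‖₊ : ℝ≥0∞) ^ pt ∂(μ.restrict (subInt x n)) := by
              conv_lhs => rw [hμsum]
              rw [lintegral_sum_measure, tsum_fintype]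
          _ ≤ ∑ n : Fin N,
              ENNReal.ofReal ((x n.succ - x n.castSucc) / (x (Fin.last N) - x 0)) *
                (c ^ pt * ∫⁻ y, (‖e y‖₊ : ℝ≥0∞) ^ pt ∂μ) :=
              Finset.sum_le_sum fun n _ => hIe n
          _ = c ^ pt * ∫⁻ y, (‖e y‖₊ : ℝ≥0∞) ^ pt ∂μ := by
              rw [← Finset.sum_mul, hones, one_mul]
      calc eLpNorm G p μ = (∫⁻ t, (‖G t‖₊ : ℝ≥0∞) ^ pt ∂μ) ^ (1 / pt) :=
            eLpNorm_eq_lintegral_rpow_enorm_toReal hp0 hpt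
        _ ≤ (c ^ pt * ∫⁻ y, (‖e y‖₊ : ℝ≥0∞) ^ pt ∂μ) ^ (1 / pt) :=
            ENNReal.rpow_le_rpow hInt (by positivity)
        _ = c * (∫⁻ y, (‖e y‖₊ : ℝ≥0∞) ^ pt ∂μ) ^ (1 / pt) := by
            rw [ENNReal.mul_rpow_of_nonneg _ _ (by positivity), ← ENNReal.rpow_mul,
              mul_one_div_cancel hpt0.ne', ENNReal.rpow_one]
        _ = c * A := by rw [hA, eLpNorm_eq_lintegral_rpow_enorm_toReal hp0 hpt]; rfl
  -- triangle inequality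
  have htri : A ≤ B + c * A := by
    calc A = eLpNorm (F + G) p μ := eLpNorm_congr_ae hae
      _ ≤ B + eLpNorm G p μ := eLpNorm_add_le hFM hGM hp1
      _ ≤ B + c * A := add_le_add le_rfl hkey
  -- final algebra
  have h1 : A - c * A ≤ B := tsub_le_iff_right.2 htri
  have h2 : (1 - c) * A ≤ B := by
    rw [ENNReal.sub_mul (fun _ _ => hAtop), one_mul]; exact h1
  have h1c0 : (1:ℝ≥0∞) - c ≠ 0 := (tsub_pos_of_lt hc1).ne'
  have h1ct : (1:ℝ≥0∞) - c ≠ ∞ := (tsub_le_self.trans_lt one_lt_top).ne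
  have h3 : A ≤ B / (1 - c) :=
    (ENNReal.le_div_iff_mul_le (Or.inl h1c0) (Or.inl h1ct)).2 (by rwa [mul_comm A (1 - c)])
  have hBd : B / (1 - c) ≠ ∞ := (ENNReal.div_lt_top hBtop h1c0).ne
  have h4 : A.toReal ≤ (B / (1 - c)).toReal := ENNReal.toReal_mono hBd h3
  have h1mc : ((1:ℝ≥0∞) - c).toReal = 1 - Λ := by
    rw [hcdef, show (1:ℝ≥0∞) = ENNReal.ofReal (1:ℝ) by simp,
      ← ENNReal.ofReal_sub _ hΛ0, ENNReal.toReal_ofReal (by linarith)]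
  have hnorm1 : ‖fb - f'b‖ = A.toReal := by rw [Lp.norm_def, hAe]
  have hnorm2 : ‖f - f'‖ = B.toReal := by rw [Lp.norm_def, hBe]
  rw [ENNReal.toReal_div, h1mc] at h4
  rw [hnorm1, hnorm2]
  calc A.toReal ≤ B.toReal / (1 - Λ) := h4
    _ = 1 / (1 - Λ) * B.toReal := by ring

end
end

section
/- For all f, f', b, b' ∈ L^p(I) (1 ≤ p ≤ ∞), it holds that ‖(f *_T b) − (f' *_T b')‖_p ≤ (1/(1−Λ))(‖f − f'‖_p + Λ‖b − b'‖_p). -/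
open MeasureTheory ENNReal

noncomputable section

lemma aux_map_affine {c d : ℝ} (hc : c ≠ 0) :
    Measure.map (fun t => c * t + d) volume
      = ENNReal.ofReal |c⁻¹| • (volume : Measure ℝ) := by
  have h : (fun t : ℝ => c * t + d) = (fun y : ℝ => y + d) ∘ (fun t : ℝ => c * t) := rfl
  rw [h, ← Measure.map_map (measurable_add_const d) (measurable_const_mul c),
    Real.map_volume_mul_left hc, Measure.map_smul, map_add_right_eq_self]

lemma aux_preimage_Ioc {c d u v a b : ℝ} (hc : 0 < c) (hu : c * a + d = u) (hv : c * b + d = v) :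
    (fun t => c * t + d) ⁻¹' Set.Ioc u v = Set.Ioc a b := by
  ext t
  simp only [Set.mem_preimage, Set.mem_Ioc, ← hu, ← hv]
  constructor <;> rintro ⟨h1, h2⟩ <;> constructor <;> nlinarith

lemma aux_preimage_Icc {c d u v a b : ℝ} (hc : 0 < c) (hu : c * a + d = u) (hv : c * b + d = v) :
    (fun t => c * t + d) ⁻¹' Set.Icc u v = Set.Icc a b := by
  ext t
  simp only [Set.mem_preimage, Set.mem_Icc, ← hu, ← hv]
  constructor <;> rintro ⟨h1, h2⟩ <;> constructor <;> nlinarith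

lemma aux_restrict_map {c d : ℝ} (hc : 0 < c) {s J : Set ℝ} (hJ : MeasurableSet J)
    (hsJ : (fun t => c * t + d) ⁻¹' J = s) :
    (volume.restrict s).map (fun t => c * t + d)
      = ENNReal.ofReal c⁻¹ • volume.restrict J := by
  rw [← hsJ, ← Measure.restrict_map (by fun_prop) hJ, aux_map_affine hc.ne',
    Measure.restrict_smul, abs_of_pos (inv_pos.2 hc)]

lemma aux_cov {c d : ℝ} (hc : 0 < c) {s J : Set ℝ} (hJ : MeasurableSet J)
    (hsJ : (fun t => c * t + d) ⁻¹' J = s) (φ : ℝ → ℝ≥0∞)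
    (hφ : AEMeasurable φ (volume.restrict J)) :
    ∫⁻ t in s, φ (c * t + d) = ENNReal.ofReal c⁻¹ * ∫⁻ y in J, φ y := by
  have hm := aux_restrict_map (d := d) hc hJ hsJ
  have hφ' : AEMeasurable φ ((volume.restrict s).map (fun t => c * t + d)) := by
    rw [hm]; exact hφ.mono' Measure.smul_absolutelyContinuous
  rw [← lintegral_map' hφ' (by fun_prop : Measurable fun t : ℝ => c * t + d).aemeasurable, hm,
    lintegral_smul_measure, smul_eq_mul]

open Fin.NatCast in
lemma aux_telescope {N : ℕ} (x : Fin (N + 1) → ℝ) :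
    ∑ n : Fin N, (x n.succ - x n.castSucc) = x (Fin.last N) - x 0 := by
  have h : ∀ n : Fin N, x n.succ - x n.castSucc
      = (fun i : ℕ => x (i + 1 : ℕ) - x (i : ℕ)) n.val := by
    intro n
    have h1 : ((n.val + 1 : ℕ) : Fin (N + 1)) = n.succ := by
      ext; simp [Fin.val_cast_of_lt (by omega : n.val + 1 < N + 1)]
    have h2 : ((n.val : ℕ) : Fin (N + 1)) = n.castSucc := by
      ext; simp [Fin.val_cast_of_lt (by omega : n.val < N + 1)]
    simp only [h1, h2]
  calc ∑ n : Fin N, (x n.succ - x n.castSucc)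
      = ∑ n : Fin N, (fun i : ℕ => x (i + 1 : ℕ) - x (i : ℕ)) n.val :=
        Finset.sum_congr rfl fun n _ => h n
    _ = ∑ i ∈ Finset.range N, (x (i + 1 : ℕ) - x (i : ℕ)) :=
        Fin.sum_univ_eq_sum_range (fun i : ℕ => x (i + 1 : ℕ) - x (i : ℕ)) N
    _ = x (N : ℕ) - x (0 : ℕ) := Finset.sum_range_sub (fun i => x (i : ℕ)) N
    _ = x (Fin.last N) - x 0 := by
        congr 1 <;> congr 1 <;> ext <;>
          simp [Fin.val_cast_of_lt (Nat.lt_succ_self N)]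

lemma aux_subInt_meas {N : ℕ} (x : Fin (N + 1) → ℝ) (n : Fin N) :
    MeasurableSet (subInt x n) := by
  unfold subInt; split
  exacts [measurableSet_Icc, measurableSet_Ioc]

lemma aux_mem_subInt {N : ℕ} {x : Fin (N + 1) → ℝ} {n : Fin N} {t : ℝ}
    (ht : t ∈ subInt x n) : x n.castSucc ≤ t ∧ t ≤ x n.succ := by
  unfold subInt at ht; split at ht
  exacts [⟨ht.1, ht.2⟩, ⟨ht.1.le, ht.2⟩]

lemma aux_Ioc_subset_subInt {N : ℕ} (x : Fin (N + 1) → ℝ) (n : Fin N) :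
    Set.Ioc (x n.castSucc) (x n.succ) ⊆ subInt x n := by
  unfold subInt; split
  exacts [Set.Ioc_subset_Icc_self, subset_rfl]

lemma aux_subInt_subset {N : ℕ} {x : Fin (N + 1) → ℝ} (hx : StrictMono x) (n : Fin N) :
    subInt x n ⊆ Set.Icc (x 0) (x (Fin.last N)) := by
  intro t ht
  obtain ⟨h1, h2⟩ := aux_mem_subInt ht
  exact ⟨le_trans (hx.monotone (Fin.zero_le _)) h1, le_trans h2 (hx.monotone (Fin.le_last _))⟩

lemma aux_disj {N : ℕ} {x : Fin (N + 1) → ℝ} (hx : StrictMono x) {m n : Fin N}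
    (hmn : m ≠ n) {t : ℝ} (hm : t ∈ subInt x m) (hn : t ∈ subInt x n) : False := by
  have key : ∀ m n : Fin N, m < n → t ∈ subInt x m → t ∈ subInt x n → False := by
    intro m n hlt hm hn
    have h1 : t ≤ x m.succ := (aux_mem_subInt hm).2
    have hn0 : ¬ n.val = 0 := by have := hlt; rw [Fin.lt_def] at this; omega
    have h2 : x n.castSucc < t := by
      unfold subInt at hn; rw [if_neg hn0] at hn; exact hn.1
    have h3 : x m.succ ≤ x n.castSucc := by
      apply hx.monotone
      rw [Fin.le_def]
      simp only [Fin.val_succ, Fin.coe_castSucc]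
      rw [Fin.lt_def] at hlt; omega
    linarith
  rcases lt_or_gt_of_ne hmn with h | h
  · exact key m n h hm hn
  · exact key n m h hn hm

lemma aux_cover {N : ℕ} (hN : 1 ≤ N) (x : Fin (N + 1) → ℝ) (hx : StrictMono x) {t : ℝ}
    (h0 : x 0 ≤ t) (hT : t ≤ x (Fin.last N)) : ∃ n : Fin N, t ∈ subInt x n := by
  suffices h : ∀ j : ℕ, (hj : j ≤ N) → t ≤ x ⟨j, by omega⟩ → ∃ n : Fin N, t ∈ subInt x n by
    refine h N le_rfl ?_
    exact hT
  intro j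
  induction j with
  | zero =>
    intro _ hj0
    have h00 : (⟨0, by omega⟩ : Fin (N + 1)) = 0 := by ext; simp
    rw [h00] at hj0
    refine ⟨⟨0, by omega⟩, ?_⟩
    have ht0 : t = x 0 := le_antisymm hj0 h0
    unfold subInt
    rw [if_pos rfl]
    constructor
    · rw [ht0]; apply hx.monotone; exact Fin.zero_le _
    · rw [ht0]; apply hx.monotone; exact Fin.zero_le _
  | succ k ih =>
    intro hk1 hle
    by_cases hck : t ≤ x ⟨k, by omega⟩
    · exact ih (by omega) hck
    · push_neg at hck
      refine ⟨⟨k, by omega⟩, aux_Ioc_subset_subInt x _ ⟨?_, ?_⟩⟩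
      · exact hck
      · exact hle


/-- For all `f, f', b, b' ∈ L^p(I)`,
`‖(f *_T b) − (f' *_T b')‖_p ≤ (1/(1−Λ))(‖f − f'‖_p + Λ‖b − b'‖_p)`. -/
theorem fractal_convolution_joint_stability
    (N : ℕ) (hN : 2 ≤ N) (x : Fin (N + 1) → ℝ) (hx : StrictMono x)
    (μ : Measure ℝ) (hμ : μ = volume.restrict (Set.Icc (x 0) (x (Fin.last N))))
    (p : ℝ≥0∞) [Fact (1 ≤ p)]
    (α : Fin N → Lp ℝ ∞ μ)
    (Λ : ℝ) (hΛdef : Λ = ⨆ n : Fin N, ‖α n‖) (hΛ : Λ < 1)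
    (f f' b b' : Lp ℝ p μ) (fb f'b' : Lp ℝ p μ)
    (hfb : SelfRef μ x (fun n => ⇑(α n)) ⇑f ⇑b ⇑fb)
    (hf'b' : SelfRef μ x (fun n => ⇑(α n)) ⇑f' ⇑b' ⇑f'b') :
    ‖fb - f'b'‖ ≤ 1 / (1 - Λ) * (‖f - f'‖ + Λ * ‖b - b'‖) := by
  have hp1 : (1 : ℝ≥0∞) ≤ p := Fact.out
  have hp0 : p ≠ 0 := (lt_of_lt_of_le zero_lt_one hp1).ne'
  -- basic measure facts
  have hμle : μ ≤ volume := by rw [hμ]; exact Measure.restrict_le_self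
  have hmemIcc : ∀ᵐ t ∂μ, t ∈ Set.Icc (x 0) (x (Fin.last N)) := by
    rw [hμ]; exact ae_restrict_mem measurableSet_Icc
  have hμres : ∀ n : Fin N, μ.restrict (subInt x n) = volume.restrict (subInt x n) := by
    intro n
    rw [hμ, Measure.restrict_restrict (aux_subInt_meas x n),
      Set.inter_eq_self_of_subset_left (aux_subInt_subset hx n)]
  have hKle : ∀ K : Set ℝ, K ⊆ Set.Icc (x 0) (x (Fin.last N)) → volume.restrict K ≤ μ := by
    intro K hK; rw [hμ]; exact Measure.restrict_mono hK le_rfl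
  -- numbers
  have hD : 0 < x (Fin.last N) - x 0 := by
    apply sub_pos.2; apply hx; rw [Fin.lt_def]; simp [Fin.val_last]; omega
  have hgap : ∀ n : Fin N, 0 < x n.succ - x n.castSucc :=
    fun n => sub_pos.2 (hx (Fin.castSucc_lt_succ : n.castSucc < n.succ))
  set c : Fin N → ℝ := fun n => (x (Fin.last N) - x 0) / (x n.succ - x n.castSucc) with hcdef
  set dd : Fin N → ℝ := fun n => x 0 - c n * x n.castSucc with hddef
  have hc : ∀ n, 0 < c n := fun n => div_pos hD (hgap n)
  set L : Fin N → ℝ → ℝ := fun n t => c n * t + dd n with hLdef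
  have hLinv : ∀ (n : Fin N) (t : ℝ), Linv x n t = L n t := by
    intro n t
    show Linv x n t = c n * t + dd n
    unfold Linv
    rw [hddef, hcdef]
    field_simp
    ring
  have hL0 : ∀ n : Fin N, c n * x n.castSucc + dd n = x 0 := by
    intro n; rw [hddef]; ring
  have hL1 : ∀ n : Fin N, c n * x n.succ + dd n = x (Fin.last N) := by
    intro n; rw [hddef, hcdef]
    have hne : x n.succ - x n.castSucc ≠ 0 := (hgap n).ne'
    field_simp
    ring
  -- target intervals
  set K : Fin N → Set ℝ := fun n =>
    if n.val = 0 then Set.Icc (x 0) (x (Fin.last N)) else Set.Ioc (x 0) (x (Fin.last N))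
    with hKdef
  have hKmeas : ∀ n, MeasurableSet (K n) := by
    intro n; rw [hKdef]; dsimp only; split
    exacts [measurableSet_Icc, measurableSet_Ioc]
  have hKsub : ∀ n, K n ⊆ Set.Icc (x 0) (x (Fin.last N)) := by
    intro n; rw [hKdef]; dsimp only; split
    exacts [subset_rfl, Set.Ioc_subset_Icc_self]
  have hpre : ∀ n : Fin N, (fun t => c n * t + dd n) ⁻¹' (K n) = subInt x n := by
    intro n
    rw [hKdef]; unfold subInt; dsimp only
    by_cases h : n.val = 0
    · rw [if_pos h, if_pos h]; exact aux_preimage_Icc (hc n) (hL0 n) (hL1 n)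
    · rw [if_neg h, if_neg h]; exact aux_preimage_Ioc (hc n) (hL0 n) (hL1 n)
  -- functions
  set Ff : ℝ → ℝ := fun t => f t - f' t with hFf
  set Gf : ℝ → ℝ := fun t => fb t - f'b' t with hGf
  set Bf : ℝ → ℝ := fun t => b t - b' t with hBf
  set Hf : ℝ → ℝ := fun t => Gf t - Bf t with hHf
  set term : Fin N → ℝ → ℝ := fun n t => (α n) (L n t) * Hf (L n t) with hterm
  set V : ℝ → ℝ := fun t => ∑ n : Fin N, Set.indicator (subInt x n) (term n) t with hV
  -- measurability
  have hqmp : ∀ n : Fin N,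
      Measure.QuasiMeasurePreserving (L n) (volume.restrict (subInt x n)) μ := by
    intro n
    refine ⟨by show Measurable fun t => c n * t + dd n; fun_prop, ?_⟩
    show Measure.map (fun t => c n * t + dd n) (volume.restrict (subInt x n)) ≪ μ
    rw [aux_restrict_map (hc n) (hKmeas n) (hpre n)]
    exact Measure.smul_absolutelyContinuous.trans
      (Measure.absolutelyContinuous_of_le (hKle _ (hKsub n)))
  have hαm : ∀ n : Fin N, AEStronglyMeasurable (⇑(α n)) μ := fun n => Lp.aestronglyMeasurable _
  have hHm : AEStronglyMeasurable Hf μ :=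
    (((Lp.aestronglyMeasurable fb).sub (Lp.aestronglyMeasurable f'b')).sub
      ((Lp.aestronglyMeasurable b).sub (Lp.aestronglyMeasurable b')))
  have hFm : AEStronglyMeasurable Ff μ :=
    (Lp.aestronglyMeasurable f).sub (Lp.aestronglyMeasurable f')
  have hGm : AEStronglyMeasurable Gf μ :=
    (Lp.aestronglyMeasurable fb).sub (Lp.aestronglyMeasurable f'b')
  have hBm : AEStronglyMeasurable Bf μ :=
    (Lp.aestronglyMeasurable b).sub (Lp.aestronglyMeasurable b')
  have htermm : ∀ n : Fin N, AEStronglyMeasurable (term n) (volume.restrict (subInt x n)) :=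
    fun n => ((hαm n).comp_quasiMeasurePreserving (hqmp n)).mul
      (hHm.comp_quasiMeasurePreserving (hqmp n))
  have hVm : AEStronglyMeasurable V μ := by
    apply Finset.aestronglyMeasurable_fun_sum
    intro n _
    rw [aestronglyMeasurable_indicator_iff (aux_subInt_meas x n), hμres n]
    exact htermm n
  -- pointwise identification of V
  have hVeq : ∀ (t : ℝ) (n : Fin N), t ∈ subInt x n → V t = term n t := by
    intro t n hn
    rw [hV]
    dsimp only
    rw [Finset.sum_eq_single_of_mem n (Finset.mem_univ n)]
    · exact Set.indicator_of_mem hn _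
    · intro m _ hmn
      exact Set.indicator_of_notMem (fun hm => aux_disj hx hmn hm hn) _
  have hVzero : ∀ t : ℝ, (¬ ∃ n : Fin N, t ∈ subInt x n) → V t = 0 := by
    intro t ht
    rw [hV]
    dsimp only
    exact Finset.sum_eq_zero fun n _ => Set.indicator_of_notMem (fun h => ht ⟨n, h⟩) _
  -- the a.e. identity
  have hGV : Gf =ᵐ[μ] fun t => Ff t + V t := by
    have h1 : ∀ᵐ t ∂μ, ∀ n : Fin N, t ∈ subInt x n →
        fb t = f t + α n (Linv x n t) * (fb (Linv x n t) - b (Linv x n t)) :=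
      (ae_all_iff).2 hfb
    have h2 : ∀ᵐ t ∂μ, ∀ n : Fin N, t ∈ subInt x n →
        f'b' t = f' t + α n (Linv x n t) * (f'b' (Linv x n t) - b' (Linv x n t)) :=
      (ae_all_iff).2 hf'b'
    filter_upwards [h1, h2, hmemIcc] with t ht1 ht2 htI
    obtain ⟨n, hn⟩ := aux_cover (by omega) x hx htI.1 htI.2
    have e1 := ht1 n hn
    have e2 := ht2 n hn
    rw [hLinv] at e1 e2
    show Gf t = Ff t + V t
    rw [hVeq t n hn, hGf, hFf, hterm, hHf, hGf, hBf]
    dsimp only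
    rw [e1, e2]
    ring
  -- bound on α
  have hΛ0 : 0 ≤ Λ := hΛdef ▸ Real.iSup_nonneg (fun n => norm_nonneg _)
  have hαle : ∀ n : Fin N, ‖α n‖ ≤ Λ := by
    intro n; rw [hΛdef]
    exact le_ciSup (f := fun n : Fin N => ‖α n‖) (Set.Finite.bddAbove (Set.finite_range _)) n
  have hαΛ : ∀ n : Fin N, ∀ᵐ y ∂μ, (‖(α n) y‖₊ : ℝ≥0∞) ≤ ENNReal.ofReal Λ := by
    intro n
    filter_upwards [enorm_ae_le_eLpNormEssSup (⇑(α n)) μ] with y hy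
    refine hy.trans ?_
    rw [← eLpNorm_exponent_top, ← ENNReal.ofReal_toReal (Lp.eLpNorm_ne_top (α n))]
    apply ENNReal.ofReal_le_ofReal
    rw [← Lp.norm_def]
    exact hαle n
  -- the key contraction estimate
  have hVH : eLpNorm V p μ ≤ ENNReal.ofReal Λ * eLpNorm Hf p μ := by
    by_cases hptop : p = ∞
    · rw [hptop, eLpNorm_exponent_top, eLpNorm_exponent_top]
      have hcomp : ∀ n : Fin N, ∀ᵐ t ∂μ, t ∈ subInt x n →
          (‖(α n) (L n t)‖₊ : ℝ≥0∞) ≤ ENNReal.ofReal Λ ∧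
          (‖Hf (L n t)‖₊ : ℝ≥0∞) ≤ eLpNormEssSup Hf μ := by
        intro n
        have h := (hqmp n).ae ((hαΛ n).and (enorm_ae_le_eLpNormEssSup Hf μ))
        rw [← hμres n] at h
        exact (ae_restrict_iff' (aux_subInt_meas x n)).1 h
      refine essSup_le_of_ae_le _ ?_
      filter_upwards [(ae_all_iff).2 hcomp] with t ht
      by_cases hex : ∃ n : Fin N, t ∈ subInt x n
      · obtain ⟨n, hn⟩ := hex
        rw [hVeq t n hn]
        have : (‖term n t‖₊ : ℝ≥0∞) = (‖(α n) (L n t)‖₊ : ℝ≥0∞) * (‖Hf (L n t)‖₊ : ℝ≥0∞) := by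
          rw [hterm]; dsimp only; rw [nnnorm_mul, ENNReal.coe_mul]
        rw [enorm_eq_nnnorm, this]
        exact mul_le_mul' (ht n hn).1 (ht n hn).2
      · rw [hVzero t hex]
        simp
    · set q := p.toReal with hqdef
      have hq : 0 < q := ENNReal.toReal_pos hp0 hptop
      rw [eLpNorm_eq_lintegral_rpow_enorm_toReal hp0 hptop, eLpNorm_eq_lintegral_rpow_enorm_toReal hp0 hptop]
      have key : ∫⁻ t, (‖V t‖₊ : ℝ≥0∞) ^ q ∂μ
          ≤ (ENNReal.ofReal Λ) ^ q * ∫⁻ t, (‖Hf t‖₊ : ℝ≥0∞) ^ q ∂μ := by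
        have hpt : (fun t => (‖V t‖₊ : ℝ≥0∞) ^ q)
            = fun t => ∑ n : Fin N,
                Set.indicator (subInt x n) (fun s => (‖term n s‖₊ : ℝ≥0∞) ^ q) t := by
          funext t
          by_cases hex : ∃ n : Fin N, t ∈ subInt x n
          · obtain ⟨n, hn⟩ := hex
            rw [hVeq t n hn,
              Finset.sum_eq_single_of_mem n (Finset.mem_univ n)
                (fun m _ hmn => Set.indicator_of_notMem (fun hm => aux_disj hx hmn hm hn) _),
              Set.indicator_of_mem hn]
          · rw [hVzero t hex, Finset.sum_eq_zero
              (fun n _ => Set.indicator_of_notMem (fun h => hex ⟨n, h⟩) _)]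
            simp [ENNReal.zero_rpow_of_pos hq]
        calc ∫⁻ t, (‖V t‖₊ : ℝ≥0∞) ^ q ∂μ
            ≤ ∫⁻ t, (‖V t‖₊ : ℝ≥0∞) ^ q ∂volume := lintegral_mono' hμle le_rfl
          _ = ∑ n : Fin N, ∫⁻ t in subInt x n, (‖term n t‖₊ : ℝ≥0∞) ^ q ∂volume := by
              rw [hpt, lintegral_finset_sum' Finset.univ ?_]
              · exact Finset.sum_congr rfl fun n _ => lintegral_indicator (aux_subInt_meas x n) _
              · intro n _
                rw [aemeasurable_indicator_iff (aux_subInt_meas x n)]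
                exact (htermm n).enorm.pow aemeasurable_const
          _ ≤ ∑ n : Fin N, ENNReal.ofReal (c n)⁻¹ *
                ((ENNReal.ofReal Λ) ^ q * ∫⁻ y, (‖Hf y‖₊ : ℝ≥0∞) ^ q ∂μ) := by
              apply Finset.sum_le_sum
              intro n _
              have hφm : AEMeasurable
                  (fun y => (‖(α n) y‖₊ : ℝ≥0∞) ^ q * (‖Hf y‖₊ : ℝ≥0∞) ^ q)
                  (volume.restrict (K n)) := by
                apply AEMeasurable.mono' ?_
                  (Measure.absolutelyContinuous_of_le (hKle _ (hKsub n)))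
                exact ((hαm n).enorm.pow aemeasurable_const).mul
                  (hHm.enorm.pow aemeasurable_const)
              have hre : ∀ t : ℝ, (‖term n t‖₊ : ℝ≥0∞) ^ q
                  = (fun y => (‖(α n) y‖₊ : ℝ≥0∞) ^ q * (‖Hf y‖₊ : ℝ≥0∞) ^ q) (c n * t + dd n) := by
                intro t
                rw [hterm]; dsimp only
                rw [nnnorm_mul, ENNReal.coe_mul, ENNReal.mul_rpow_of_nonneg _ _ hq.le]
              calc ∫⁻ t in subInt x n, (‖term n t‖₊ : ℝ≥0∞) ^ q ∂volume
                  = ENNReal.ofReal (c n)⁻¹ *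
                    ∫⁻ y in K n, (‖(α n) y‖₊ : ℝ≥0∞) ^ q * (‖Hf y‖₊ : ℝ≥0∞) ^ q ∂volume := by
                    simp_rw [hre]
                    exact aux_cov (hc n) (hKmeas n) (hpre n) _ hφm
                _ ≤ ENNReal.ofReal (c n)⁻¹ *
                    ((ENNReal.ofReal Λ) ^ q * ∫⁻ y, (‖Hf y‖₊ : ℝ≥0∞) ^ q ∂μ) := by
                    apply mul_le_mul' le_rfl
                    calc ∫⁻ y in K n, (‖(α n) y‖₊ : ℝ≥0∞) ^ q * (‖Hf y‖₊ : ℝ≥0∞) ^ q ∂volume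
                        ≤ ∫⁻ y, (‖(α n) y‖₊ : ℝ≥0∞) ^ q * (‖Hf y‖₊ : ℝ≥0∞) ^ q ∂μ :=
                          lintegral_mono' (hKle _ (hKsub n)) le_rfl
                      _ ≤ ∫⁻ y, (ENNReal.ofReal Λ) ^ q * (‖Hf y‖₊ : ℝ≥0∞) ^ q ∂μ := by
                          apply lintegral_mono_ae
                          filter_upwards [hαΛ n] with y hy
                          exact mul_le_mul' (ENNReal.rpow_le_rpow hy hq.le) le_rfl
                      _ = (ENNReal.ofReal Λ) ^ q * ∫⁻ y, (‖Hf y‖₊ : ℝ≥0∞) ^ q ∂μ :=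
                          lintegral_const_mul' _ _
                            (ENNReal.rpow_ne_top_of_nonneg hq.le ENNReal.ofReal_ne_top)
          _ = (∑ n : Fin N, ENNReal.ofReal (c n)⁻¹) *
                ((ENNReal.ofReal Λ) ^ q * ∫⁻ y, (‖Hf y‖₊ : ℝ≥0∞) ^ q ∂μ) := by
              rw [← Finset.sum_mul]
          _ = (ENNReal.ofReal Λ) ^ q * ∫⁻ y, (‖Hf y‖₊ : ℝ≥0∞) ^ q ∂μ := by
              have hsum1 : ∑ n : Fin N, ENNReal.ofReal (c n)⁻¹ = 1 := by
                rw [← ENNReal.ofReal_sum_of_nonneg (fun n _ => (inv_pos.2 (hc n)).le)]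
                have : ∑ n : Fin N, (c n)⁻¹ = 1 := by
                  have h1 : ∀ n : Fin N, (c n)⁻¹
                      = (x n.succ - x n.castSucc) / (x (Fin.last N) - x 0) := by
                    intro n; rw [hcdef]; dsimp only; rw [inv_div]
                  rw [Finset.sum_congr rfl (fun n _ => h1 n), ← Finset.sum_div,
                    aux_telescope, div_self hD.ne']
                rw [this, ENNReal.ofReal_one]
              rw [hsum1, one_mul]
      calc (∫⁻ t, (‖V t‖₊ : ℝ≥0∞) ^ q ∂μ) ^ (1 / q)
          ≤ ((ENNReal.ofReal Λ) ^ q * ∫⁻ t, (‖Hf t‖₊ : ℝ≥0∞) ^ q ∂μ) ^ (1 / q) :=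
            ENNReal.rpow_le_rpow key (by positivity)
        _ = ENNReal.ofReal Λ * (∫⁻ t, (‖Hf t‖₊ : ℝ≥0∞) ^ q ∂μ) ^ (1 / q) := by
            rw [ENNReal.mul_rpow_of_nonneg _ _ (by positivity), ← ENNReal.rpow_mul,
              mul_one_div_cancel hq.ne', ENNReal.rpow_one]
  -- triangle inequalities
  have hG1 : eLpNorm Gf p μ ≤ eLpNorm Ff p μ + eLpNorm V p μ := by
    rw [eLpNorm_congr_ae hGV]
    exact eLpNorm_add_le hFm hVm hp1
  have hH1 : eLpNorm Hf p μ ≤ eLpNorm Gf p μ + eLpNorm Bf p μ :=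
    eLpNorm_sub_le hGm hBm hp1
  have hchain : eLpNorm Gf p μ ≤ eLpNorm Ff p μ +
      ENNReal.ofReal Λ * (eLpNorm Gf p μ + eLpNorm Bf p μ) :=
    le_trans hG1 (add_le_add le_rfl (le_trans hVH (mul_le_mul' le_rfl hH1)))
  -- finiteness and conversion to real norms
  have heGeq : eLpNorm Gf p μ = eLpNorm (⇑(fb - f'b')) p μ :=
    (eLpNorm_congr_ae (Lp.coeFn_sub fb f'b')).symm
  have heFeq : eLpNorm Ff p μ = eLpNorm (⇑(f - f')) p μ :=
    (eLpNorm_congr_ae (Lp.coeFn_sub f f')).symm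
  have heBeq : eLpNorm Bf p μ = eLpNorm (⇑(b - b')) p μ :=
    (eLpNorm_congr_ae (Lp.coeFn_sub b b')).symm
  have heG : eLpNorm Gf p μ ≠ ∞ := by rw [heGeq]; exact Lp.eLpNorm_ne_top _
  have heF : eLpNorm Ff p μ ≠ ∞ := by rw [heFeq]; exact Lp.eLpNorm_ne_top _
  have heB : eLpNorm Bf p μ ≠ ∞ := by rw [heBeq]; exact Lp.eLpNorm_ne_top _
  have hRHSne : eLpNorm Ff p μ +
      ENNReal.ofReal Λ * (eLpNorm Gf p μ + eLpNorm Bf p μ) ≠ ∞ :=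
    ENNReal.add_ne_top.2 ⟨heF, ENNReal.mul_ne_top ENNReal.ofReal_ne_top
      (ENNReal.add_ne_top.2 ⟨heG, heB⟩)⟩
  have hreal := ENNReal.toReal_mono hRHSne hchain
  rw [ENNReal.toReal_add heF (ENNReal.mul_ne_top ENNReal.ofReal_ne_top
      (ENNReal.add_ne_top.2 ⟨heG, heB⟩)), ENNReal.toReal_mul,
    ENNReal.toReal_ofReal hΛ0, ENNReal.toReal_add heG heB] at hreal
  have hnG : ‖fb - f'b'‖ = (eLpNorm Gf p μ).toReal := by rw [Lp.norm_def, heGeq]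
  have hnF : ‖f - f'‖ = (eLpNorm Ff p μ).toReal := by rw [Lp.norm_def, heFeq]
  have hnB : ‖b - b'‖ = (eLpNorm Bf p μ).toReal := by rw [Lp.norm_def, heBeq]
  rw [hnG, hnF, hnB]
  have h1Λ : 0 < 1 - Λ := by linarith
  rw [div_mul_eq_mul_div, one_mul, le_div_iff₀ h1Λ]
  nlinarith [hreal]


end
end
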